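/- arXiv:1408.0719 — 7 statements merged into one kernel-verified Lean document; each statement's English description precedes it below -/
import Mathlib

section
/- Let P be a row-stochastic n×n matrix, A = diag(α₁,…,αₙ) with 0 ≤ αᵢ < 1, and v a probability vector (row vector, nonnegative entries summing to 1). Define π = (1 / (vᵀ(I−AP)⁻¹𝟙)) · vᵀ(I−AP)⁻¹. Then π is a stationary distribution of the Markov chain with transition matrix P̃ = A·P + (I−A)·𝟙·vᵀ, i.e., π·P̃ = π and π·𝟙 = 1. -/
open Matrix

/-- Core positivity lemma: if `(1 - diagonal α * P) *ᵥ y = e` with `e ≥ 0`,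
`P` row-stochastic nonnegative, `0 ≤ α i < 1`, then `y ≥ 0`. -/
lemma aux_nonneg {n : ℕ} (P : Matrix (Fin n) (Fin n) ℝ) (α : Fin n → ℝ)
    (hP0 : ∀ i j, 0 ≤ P i j) (hP1 : ∀ i, ∑ j, P i j = 1)
    (hα : ∀ i, 0 ≤ α i ∧ α i < 1)
    (y e : Fin n → ℝ) (hy : (1 - Matrix.diagonal α * P).mulVec y = e)
    (he : ∀ i, 0 ≤ e i) : ∀ i, 0 ≤ y i := by
  rcases Nat.eq_zero_or_pos n with h0 | h0
  · intro i; exact absurd i.2 (by omega)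
  · have : Nonempty (Fin n) := ⟨⟨0, h0⟩⟩
    obtain ⟨k, -, hk⟩ := Finset.exists_min_image Finset.univ y ⟨Classical.arbitrary _, Finset.mem_univ _⟩
    have hk' : ∀ i, y k ≤ y i := fun i => hk i (Finset.mem_univ i)
    have hek : e k = y k - ∑ l, α k * P k l * y l := by
      rw [← hy]
      simp [Matrix.mulVec, dotProduct, Matrix.sub_apply, Matrix.one_apply,
        Matrix.diagonal_mul, sub_mul, Finset.sum_sub_distrib, mul_assoc]
    have hsum : α k * y k ≤ ∑ l, α k * P k l * y l := by
      calc α k * y k = ∑ l, α k * P k l * y k := by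
            rw [← Finset.sum_mul, ← Finset.mul_sum, hP1 k, mul_one]
        _ ≤ ∑ l, α k * P k l * y l := by
            apply Finset.sum_le_sum
            intro l _
            exact mul_le_mul_of_nonneg_left (hk' l)
              (mul_nonneg (hα k).1 (hP0 k l))
    have hyk : 0 ≤ y k := by
      have h1 : 0 ≤ y k - α k * y k := le_trans (he k) (by rw [hek]; linarith)
      have h2 : (1 - α k) * y k = y k - α k * y k := by ring
      nlinarith [(hα k).2]
    intro i; exact le_trans hyk (hk' i)

theorem stmt1 {n : ℕ} (P A : Matrix (Fin n) (Fin n) ℝ) (α v : Fin n → ℝ)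
    (hP0 : ∀ i j, 0 ≤ P i j) (hP1 : ∀ i, ∑ j, P i j = 1)
    (hA : A = Matrix.diagonal α) (hα : ∀ i, 0 ≤ α i ∧ α i < 1)
    (hv0 : ∀ i, 0 ≤ v i) (hv1 : ∑ i, v i = 1)
    (π : Fin n → ℝ)
    (hπ : π = (∑ j, (Matrix.vecMul v (1 - A * P)⁻¹) j)⁻¹ •
        Matrix.vecMul v (1 - A * P)⁻¹)
    (Ptilde : Matrix (Fin n) (Fin n) ℝ)
    (hPt : Ptilde = A * P + (1 - A) * Matrix.of (fun _ j => v j)) :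
    Matrix.vecMul π Ptilde = π ∧ ∑ j, π j = 1 := by
  subst hA
  set M : Matrix (Fin n) (Fin n) ℝ := 1 - Matrix.diagonal α * P with hM
  -- M is invertible
  have hinj : Function.Injective M.mulVec := by
    intro y z hyz
    have h1 : M.mulVec (y - z) = 0 := by
      rw [Matrix.mulVec_sub, hyz, sub_self]
    have h2 : ∀ i, 0 ≤ (y - z) i :=
      aux_nonneg P α hP0 hP1 hα _ 0 h1 (fun i => le_refl 0)
    have h3 : M.mulVec (z - y) = 0 := by
      rw [Matrix.mulVec_sub, hyz, sub_self]
    have h4 : ∀ i, 0 ≤ (z - y) i :=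
      aux_nonneg P α hP0 hP1 hα _ 0 h3 (fun i => le_refl 0)
    funext i
    have := h2 i
    have := h4 i
    simp only [Pi.sub_apply] at *
    linarith
  have hunit : IsUnit M := Matrix.mulVec_injective_iff_isUnit.mp hinj
  have hdet : IsUnit M.det := (Matrix.isUnit_iff_isUnit_det M).mp hunit
  set w : Fin n → ℝ := Matrix.vecMul v M⁻¹ with hw
  -- w * M = v
  have hkey : Matrix.vecMul w M = v := by
    rw [hw, Matrix.vecMul_vecMul, Matrix.nonsing_inv_mul M hdet, Matrix.vecMul_one]
  -- entrywise: v j = w j - ∑ i, w i * (α i * P i j)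
  have hkey' : ∀ j, v j = w j - ∑ i, w i * (α i * P i j) := by
    intro j
    rw [← hkey]
    simp [Matrix.vecMul, dotProduct, hM, Matrix.sub_apply, Matrix.one_apply,
      Matrix.diagonal_mul, mul_sub, Finset.sum_sub_distrib]
  -- w ≥ 0, via columns of M⁻¹
  have hMinv : ∀ i j, 0 ≤ M⁻¹ i j := by
    intro i j
    have hcol : M.mulVec (M⁻¹.mulVec (Pi.single j 1)) = Pi.single j 1 := by
      rw [Matrix.mulVec_mulVec, Matrix.mul_nonsing_inv M hdet, Matrix.one_mulVec]
    have := aux_nonneg P α hP0 hP1 hα _ _ hcol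
      (fun i => by
        rcases eq_or_ne i j with h | h
        · subst h; simp
        · simp [Pi.single_eq_of_ne h]) i
    simpa [Matrix.mulVec_single] using this
  have hw0 : ∀ j, 0 ≤ w j := by
    intro j
    rw [hw]
    simp only [Matrix.vecMul, dotProduct]
    exact Finset.sum_nonneg fun i _ => mul_nonneg (hv0 i) (hMinv i j)
  -- ∑ w i * (1 - α i) = 1
  have hin : ∀ i, ∑ j, w i * (α i * P i j) = w i * α i := by
    intro i
    rw [← Finset.mul_sum, ← Finset.mul_sum, hP1 i, mul_one]
  have hsum1 : ∑ i, w i * (1 - α i) = 1 := by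
    have h1 : (1:ℝ) = ∑ j, w j - ∑ i, w i * α i := by
      calc (1:ℝ) = ∑ j, v j := hv1.symm
        _ = ∑ j, (w j - ∑ i, w i * (α i * P i j)) :=
            Finset.sum_congr rfl fun j _ => hkey' j
        _ = ∑ j, w j - ∑ i, ∑ j, w i * (α i * P i j) := by
            rw [Finset.sum_sub_distrib, Finset.sum_comm]
        _ = ∑ j, w j - ∑ i, w i * α i := by simp only [hin]
    have h2 : ∑ i, w i * (1 - α i) = ∑ j, w j - ∑ i, w i * α i := by
      simp [mul_sub, Finset.sum_sub_distrib]
    linarith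
  -- S := ∑ w j  satisfies S = 1 + ∑ w i * α i ≥ 1
  set S : ℝ := ∑ j, w j with hS
  have hS1 : S = 1 + ∑ i, w i * α i := by
    rw [← hsum1, hS]
    simp [mul_sub, Finset.sum_sub_distrib]
  have hSpos : 0 < S := by
    have : 0 ≤ ∑ i, w i * α i :=
      Finset.sum_nonneg fun i _ => mul_nonneg (hw0 i) (hα i).1
    rw [hS1]; linarith
  have hSne : S ≠ 0 := ne_of_gt hSpos
  -- vecMul w Ptilde = w
  have hPtapp : ∀ i j, Ptilde i j = α i * P i j + (1 - α i) * v j := by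
    intro i j
    rw [hPt]
    simp only [Matrix.add_apply, Matrix.sub_mul, Matrix.one_mul, Matrix.sub_apply,
      Matrix.diagonal_mul, Matrix.of_apply]
    ring
  have hmain : Matrix.vecMul w Ptilde = w := by
    funext j
    have h3 : Matrix.vecMul w Ptilde j = ∑ i, w i * (α i * P i j + (1 - α i) * v j) := by
      simp only [Matrix.vecMul, dotProduct, hPtapp]
    rw [h3]
    have e1 : ∑ i, w i * (α i * P i j + (1 - α i) * v j)
        = (∑ i, w i * (α i * P i j)) + (∑ i, w i * (1 - α i)) * v j := by
      rw [Finset.sum_mul, ← Finset.sum_add_distrib]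
      exact Finset.sum_congr rfl fun i _ => by ring
    rw [e1, hsum1]
    have := hkey' j
    linarith
  constructor
  · rw [hπ, Matrix.smul_vecMul, hmain]
  · rw [hπ]
    simp only [Pi.smul_apply, smul_eq_mul, ← Finset.mul_sum, ← hS]
    exact inv_mul_cancel₀ hSne
end

section
/- Let W be a symmetric n×n matrix with nonnegative entries and positive row sums dᵢ = Σⱼ Wᵢⱼ, D = diag(d₁,…,dₙ), P = D⁻¹W, and A = diag(αᵢ) with 0 < αᵢ < 1. Define for each i the quantity Kᵢ = 1/(eᵢᵀ(I−AP)⁻¹𝟙) and πⱼ(i) = Kᵢ · eᵢᵀ(I−AP)⁻¹eⱼ. Then (dᵢ/(αᵢ Kᵢ))·πⱼ(i) = (dⱼ/(αⱼ Kⱼ))·πᵢ(j) for all i, j. -/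
open Matrix

theorem stmt4 {n : ℕ} (W D P A : Matrix (Fin n) (Fin n) ℝ) (d α : Fin n → ℝ)
    (hWs : W.IsSymm) (hW0 : ∀ i j, 0 ≤ W i j)
    (hd : ∀ i, d i = ∑ j, W i j) (hdpos : ∀ i, 0 < d i)
    (hD : D = Matrix.diagonal d) (hP : P = D⁻¹ * W)
    (hA : A = Matrix.diagonal α) (hα : ∀ i, 0 < α i ∧ α i < 1)
    (K : Fin n → ℝ) (hK : ∀ i, K i = (∑ j, (1 - A * P)⁻¹ i j)⁻¹)
    (pr : Fin n → Fin n → ℝ)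
    (hpr : ∀ i j, pr i j = K i * (1 - A * P)⁻¹ i j)
    (i j : Fin n) :
    d i / (α i * K i) * pr i j = d j / (α j * K j) * pr j i := by
  have hdne : ∀ a, d a ≠ 0 := fun a => (hdpos a).ne'
  have hαne : ∀ a, α a ≠ 0 := fun a => (hα a).1.ne'
  set r : Fin n → ℝ := fun a => d a / α a with hr
  set c : Fin n → ℝ := fun a => α a / d a with hc
  have hcne : ∀ a, c a ≠ 0 := fun a => div_ne_zero (hαne a) (hdne a)
  set S : Matrix (Fin n) (Fin n) ℝ := Matrix.diagonal r - W with hS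
  -- D⁻¹ is the diagonal of reciprocals
  have hDinv : (Matrix.diagonal d)⁻¹ = Matrix.diagonal (fun a => (d a)⁻¹) := by
    apply Matrix.inv_eq_right_inv
    rw [Matrix.diagonal_mul_diagonal]
    have : (fun a => d a * (d a)⁻¹) = fun _ => (1 : ℝ) :=
      funext fun a => mul_inv_cancel₀ (hdne a)
    rw [this, Matrix.diagonal_one]
  -- A * P = diagonal c * W
  have hAP : A * P = Matrix.diagonal c * W := by
    rw [hA, hP, hD, hDinv, ← Matrix.mul_assoc, Matrix.diagonal_mul_diagonal]
    congr 1
  have hcr : (fun a => c a * r a) = fun _ => (1 : ℝ) := by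
    funext a
    simp only [hc, hr]
    field_simp
    rw [mul_comm (α a) (d a)]
    exact div_self (mul_ne_zero (hdne a) (hαne a))
  -- factorization 1 - A*P = diagonal c * S
  have hfac : 1 - A * P = Matrix.diagonal c * S := by
    rw [hS, Matrix.mul_sub, ← hAP, Matrix.diagonal_mul_diagonal, hcr, Matrix.diagonal_one]
  -- S has nonzero determinant by strict diagonal dominance
  have hdetS : S.det ≠ 0 := by
    apply det_ne_zero_of_sum_row_lt_diag
    intro k
    have hWle : W k k ≤ d k := by
      rw [hd]
      exact Finset.single_le_sum (fun b _ => hW0 k b) (Finset.mem_univ k)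
    have h1 : ∀ b ∈ Finset.univ.erase k, ‖S k b‖ = W k b := by
      intro b hb
      have hbk : b ≠ k := (Finset.mem_erase.mp hb).1
      have : S k b = -W k b := by
        simp [hS, Matrix.sub_apply, Matrix.diagonal_apply_ne' r hbk]
      rw [this, Real.norm_eq_abs, abs_neg, abs_of_nonneg (hW0 k b)]
    rw [Finset.sum_congr rfl h1]
    have hsum : ∑ b ∈ Finset.univ.erase k, W k b = d k - W k k := by
      have := Finset.add_sum_erase Finset.univ (fun b => W k b) (Finset.mem_univ k)
      rw [hd k]
      linarith [this]
    have hdlt : d k < d k / α k := by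
      rw [lt_div_iff₀ (hα k).1]
      nlinarith [(hα k).2, hdpos k]
    have hSkk : S k k = d k / α k - W k k := by
      simp [hS, hr, Matrix.sub_apply, Matrix.diagonal_apply_eq]
    rw [hsum, hSkk, Real.norm_eq_abs, abs_of_pos (by linarith)]
    linarith
  have hdet1 : (1 - A * P).det ≠ 0 := by
    rw [hfac, Matrix.det_mul, Matrix.det_diagonal]
    exact mul_ne_zero (Finset.prod_ne_zero_iff.mpr fun k _ => hcne k) hdetS
  -- inverse formula
  have hdiagcinv : (Matrix.diagonal c)⁻¹ = Matrix.diagonal r := by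
    apply Matrix.inv_eq_right_inv
    rw [Matrix.diagonal_mul_diagonal, hcr, Matrix.diagonal_one]
  have hM : (1 - A * P)⁻¹ = S⁻¹ * Matrix.diagonal r := by
    rw [hfac, Matrix.mul_inv_rev, hdiagcinv]
  have hMentry : ∀ a b, (1 - A * P)⁻¹ a b = S⁻¹ a b * r b := by
    intro a b
    rw [hM, Matrix.mul_diagonal]
  -- symmetry of S⁻¹
  have hSsym : Sᵀ = S := by
    rw [hS, Matrix.transpose_sub, Matrix.diagonal_transpose, hWs]
  have hSinvsymm : ∀ a b, S⁻¹ a b = S⁻¹ b a := by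
    intro a b
    calc S⁻¹ a b = (S⁻¹)ᵀ b a := rfl
      _ = (Sᵀ)⁻¹ b a := by rw [Matrix.transpose_nonsing_inv]
      _ = S⁻¹ b a := by rw [hSsym]
  -- positivity of row sums of the inverse
  set v : Fin n → ℝ := fun a => ∑ b, (1 - A * P)⁻¹ a b with hv
  have hAPentry : ∀ a b, (A * P) a b = c a * W a b := by
    intro a b
    rw [hAP, Matrix.diagonal_mul]
  have hAPnonneg : ∀ a b, 0 ≤ (A * P) a b := by
    intro a b
    rw [hAPentry]
    exact mul_nonneg (le_of_lt (div_pos (hα a).1 (hdpos a))) (hW0 a b)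
  have hAProw : ∀ a, ∑ b, (A * P) a b = α a := by
    intro a
    have : ∑ b, (A * P) a b = c a * ∑ b, W a b := by
      rw [Finset.mul_sum]
      exact Finset.sum_congr rfl fun b _ => hAPentry a b
    rw [this, ← hd]
    exact div_mul_cancel₀ (α a) (hdne a)
  have hexp : (1 - A * P)⁻¹ = 1 + (A * P) * (1 - A * P)⁻¹ := by
    have hMul := Matrix.mul_nonsing_inv _ (isUnit_iff_ne_zero.mpr hdet1)
    rw [Matrix.sub_mul, Matrix.one_mul] at hMul
    exact sub_eq_iff_eq_add.mp hMul
  have hveq : ∀ a, v a = 1 + ∑ k, (A * P) a k * v k := by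
    intro a
    calc v a = ∑ b, ((1 : Matrix (Fin n) (Fin n) ℝ) + (A * P) * (1 - A * P)⁻¹) a b := by
          rw [hv, ← hexp]
      _ = ∑ b, ((1 : Matrix (Fin n) (Fin n) ℝ) a b
            + ∑ k, (A * P) a k * (1 - A * P)⁻¹ k b) := by
          simp [Matrix.add_apply, Matrix.mul_apply]
      _ = (∑ b, (1 : Matrix (Fin n) (Fin n) ℝ) a b)
            + ∑ b, ∑ k, (A * P) a k * (1 - A * P)⁻¹ k b := Finset.sum_add_distrib
      _ = 1 + ∑ k, (A * P) a k * v k := by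
          rw [Finset.sum_comm]
          congr 1
          · simp [Matrix.one_apply]
          · exact Finset.sum_congr rfl fun k _ => (Finset.mul_sum _ _ _).symm
  obtain ⟨i0, -, hi0⟩ := Finset.exists_min_image Finset.univ v ⟨i, Finset.mem_univ i⟩
  have hi0' : ∀ b, v i0 ≤ v b := fun b => hi0 b (Finset.mem_univ b)
  have hkey : 1 + α i0 * v i0 ≤ v i0 := by
    have hle : α i0 * v i0 ≤ ∑ k, (A * P) i0 k * v k := by
      rw [← hAProw i0, Finset.sum_mul]
      exact Finset.sum_le_sum fun k _ =>
        mul_le_mul_of_nonneg_left (hi0' k) (hAPnonneg i0 k)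
    linarith [hveq i0]
  have hvi0pos : 0 < v i0 := by nlinarith [(hα i0).1, (hα i0).2]
  have hvpos : ∀ a, 0 < v a := fun a => lt_of_lt_of_le hvi0pos (hi0' a)
  have hKne : ∀ a, K a ≠ 0 := by
    intro a
    rw [hK]
    exact inv_ne_zero (hvpos a).ne'
  -- finish
  have cancel : ∀ (a : Fin n) (x : ℝ), d a / (α a * K a) * (K a * x) = d a / α a * x := by
    intro a x
    have hKa := hKne a
    have h1 : d a / (α a * K a) = d a / α a * (K a)⁻¹ := by
      rw [← div_div, div_eq_mul_inv (d a / α a)]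
    rw [h1]
    calc d a / α a * (K a)⁻¹ * (K a * x)
        = d a / α a * (((K a)⁻¹ * K a) * x) := by ring
      _ = d a / α a * x := by rw [inv_mul_cancel₀ hKa, one_mul]
  rw [hpr i j, hpr j i, hMentry i j, hMentry j i, hSinvsymm j i, hr, cancel, cancel]
  ring
end

section
/- Let W be symmetric with nonnegative entries and positive row sums dᵢ, D = diag(dᵢ), P = D⁻¹W, A = diag(αᵢ) with 0 < αᵢ < 1. Define ρⱼ(i) = eᵢᵀ(I−AP)⁻¹(I−A)eⱼ = (1−αⱼ)·eᵢᵀ(I−AP)⁻¹eⱼ. Then ((1−αᵢ)/αᵢ)·dᵢ·ρⱼ(i) = ((1−αⱼ)/αⱼ)·dⱼ·ρᵢ(j) for all i, j. -/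
open Matrix

theorem stmt6 {n : ℕ} (W D P A : Matrix (Fin n) (Fin n) ℝ) (d α : Fin n → ℝ)
    (hWs : W.IsSymm) (hW0 : ∀ i j, 0 ≤ W i j)
    (hd : ∀ i, d i = ∑ j, W i j) (hdpos : ∀ i, 0 < d i)
    (hD : D = Matrix.diagonal d) (hP : P = D⁻¹ * W)
    (hA : A = Matrix.diagonal α) (hα : ∀ i, 0 < α i ∧ α i < 1)
    (ρ : Fin n → Fin n → ℝ)
    (hρ : ∀ i j, ρ i j = (1 - α j) * (1 - A * P)⁻¹ i j)
    (i j : Fin n) :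
    (1 - α i) / α i * d i * ρ i j = (1 - α j) / α j * d j * ρ j i := by
  have hdne : ∀ k, d k ≠ 0 := fun k => (hdpos k).ne'
  have hαne : ∀ k, α k ≠ 0 := fun k => (hα k).1.ne'
  set S : Matrix (Fin n) (Fin n) ℝ := Matrix.diagonal (fun k => d k / α k) - W with hS
  have h1 : (Matrix.diagonal fun k => α k / d k) * (Matrix.diagonal fun k => d k / α k)
      = 1 := by
    rw [Matrix.diagonal_mul_diagonal,
      show (fun i => α i / d i * (d i / α i)) = fun _ => (1:ℝ) by
        funext k
        rw [div_mul_div_comm, mul_comm (α k) (d k)]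
        exact div_self (mul_ne_zero (hdne k) (hαne k)),
      Matrix.diagonal_one]
  have hDinv : D⁻¹ = Matrix.diagonal (fun k => (d k)⁻¹) := by
    rw [hD]
    apply Matrix.inv_eq_right_inv
    rw [Matrix.diagonal_mul_diagonal,
      show (fun i => d i * (d i)⁻¹) = fun _ => (1:ℝ) by
        funext k; exact mul_inv_cancel₀ (hdne k),
      Matrix.diagonal_one]
  have hfac : 1 - A * P = Matrix.diagonal (fun k => α k / d k) * S := by
    rw [hS, Matrix.mul_sub, h1, hP, hDinv, hA, ← Matrix.mul_assoc,
      Matrix.diagonal_mul_diagonal,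
      show (fun i => α i * (d i)⁻¹) = fun k => α k / d k by
        funext k; rw [div_eq_mul_inv]]
  have hdiaginv : (Matrix.diagonal (fun k => α k / d k))⁻¹
      = Matrix.diagonal (fun k => d k / α k) :=
    Matrix.inv_eq_right_inv h1
  have hMinv : (1 - A * P)⁻¹ = S⁻¹ * Matrix.diagonal (fun k => d k / α k) := by
    rw [hfac, Matrix.mul_inv_rev, hdiaginv]
  have hSsymm : Sᵀ = S := by
    rw [hS, Matrix.transpose_sub, Matrix.diagonal_transpose, hWs.eq]
  have hSinv_symm : ∀ a b, S⁻¹ a b = S⁻¹ b a := by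
    intro a b
    have : (S⁻¹)ᵀ = S⁻¹ := by
      rw [Matrix.transpose_nonsing_inv, hSsymm]
    calc S⁻¹ a b = (S⁻¹)ᵀ b a := rfl
      _ = S⁻¹ b a := by rw [this]
  have hentry : ∀ a b, (1 - A * P)⁻¹ a b = S⁻¹ a b * (d b / α b) := by
    intro a b
    rw [hMinv, Matrix.mul_diagonal]
  rw [hρ, hρ, hentry, hentry, hSinv_symm i j]
  field_simp
end

section
/- Let W be symmetric with nonnegative entries and positive degrees dᵢ, P = D⁻¹W, and α ∈ (0,1). Define πⱼ(i) = (1−α)·eᵢᵀ(I−αP)⁻¹eⱼ. Then dᵢ·πⱼ(i) = dⱼ·πᵢ(j) for all i, j. -/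
open Matrix

theorem stmt10 {n : ℕ} (W D P : Matrix (Fin n) (Fin n) ℝ) (d : Fin n → ℝ) (α : ℝ)
    (hWs : W.IsSymm) (hW0 : ∀ i j, 0 ≤ W i j)
    (hd : ∀ i, d i = ∑ j, W i j) (hdpos : ∀ i, 0 < d i)
    (hD : D = Matrix.diagonal d) (hP : P = D⁻¹ * W)
    (hα : 0 < α) (hα1 : α < 1)
    (pr : Fin n → Fin n → ℝ)
    (hpr : ∀ i j, pr i j = (1 - α) * (1 - α • P)⁻¹ i j)
    (i j : Fin n) :
    d i * pr i j = d j * pr j i := by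
  have hDdet : IsUnit D.det := by
    rw [hD, Matrix.det_diagonal]
    exact isUnit_iff_ne_zero.mpr (Finset.prod_ne_zero_iff.mpr fun k _ => (hdpos k).ne')
  set A := D - α • W with hA
  have hAs : Aᵀ = A := by
    rw [hA, Matrix.transpose_sub, Matrix.transpose_smul, hWs, hD, Matrix.diagonal_transpose]
  have hfac : 1 - α • P = D⁻¹ * A := by
    rw [hP, hA, Matrix.mul_sub, Matrix.nonsing_inv_mul D hDdet, Matrix.mul_smul]
  have hinv : (1 - α • P)⁻¹ = A⁻¹ * D := by
    rw [hfac, Matrix.mul_inv_rev, Matrix.nonsing_inv_nonsing_inv D hDdet]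
  have hAinv : (A⁻¹)ᵀ = A⁻¹ := by
    rw [Matrix.transpose_nonsing_inv, hAs]
  have hsym : A⁻¹ i j = A⁻¹ j i := by
    conv_lhs => rw [← hAinv]
    exact Matrix.transpose_apply _ _ _
  have hentry : ∀ a b, (1 - α • P)⁻¹ a b = A⁻¹ a b * d b := by
    intro a b
    rw [hinv, hD, Matrix.mul_diagonal]
  rw [hpr, hpr, hentry, hentry, hsym]
  ring
end

section
/- Let G be a connected undirected graph with degrees dᵢ, and let a > 0. Set αᵢ = dᵢ/(dᵢ+a) and restart distribution v = 𝟙/n (uniform). Then the vector π with πᵢ = (dᵢ+a)/(2|E|+na) is the stationary distribution of the transition matrix P̃ = AD⁻¹W + (I−A)𝟙vᵀ, i.e., πP̃ = π and Σᵢπᵢ = 1. -/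
open Matrix

theorem stmt11 {n : ℕ} (G : SimpleGraph (Fin n)) [DecidableRel G.Adj]
    (hG : G.Connected) (a : ℝ) (ha : 0 < a)
    (W D A : Matrix (Fin n) (Fin n) ℝ) (d α v π : Fin n → ℝ)
    (hW : W = G.adjMatrix ℝ) (hd : ∀ i, d i = (G.degree i : ℝ))
    (hD : D = Matrix.diagonal d)
    (hα : ∀ i, α i = d i / (d i + a)) (hA : A = Matrix.diagonal α)
    (hv : ∀ i, v i = 1 / (n : ℝ))
    (hπ : ∀ i, π i = (d i + a) / ((∑ k, d k) + n * a))
    (Ptilde : Matrix (Fin n) (Fin n) ℝ)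
    (hPt : Ptilde = A * D⁻¹ * W + (1 - A) * Matrix.of (fun _ j => v j)) :
    Matrix.vecMul π Ptilde = π ∧ ∑ i, π i = 1 := by
  have hne : Nonempty (Fin n) := hG.nonempty
  have hn : 0 < n := hne.elim fun i => i.pos
  have hnR : (0 : ℝ) < n := by exact_mod_cast hn
  have hdnn : ∀ i, 0 ≤ d i := fun i => by rw [hd i]; positivity
  have hda : ∀ i, 0 < d i + a := fun i => by have := hdnn i; linarith
  have hda' : ∀ i, d i + a ≠ 0 := fun i => (hda i).ne'
  set S : ℝ := (∑ k, d k) + n * a with hSdef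
  have hS : 0 < S := by
    have h1 : (0:ℝ) ≤ ∑ k, d k := Finset.sum_nonneg fun i _ => hdnn i
    have h2 : (0:ℝ) < n * a := mul_pos hnR ha
    linarith
  have hSsum : ∑ i, (d i + a) = S := by
    rw [Finset.sum_add_distrib, Finset.sum_const, Finset.card_univ, Fintype.card_fin,
      nsmul_eq_mul, hSdef]
  -- column sums of W
  have hcol : ∀ j, ∑ i, W i j = d j := by
    intro j
    rw [hW, hd]
    simp only [SimpleGraph.adjMatrix_apply]
    rw [Finset.sum_boole]
    congr 1
    rw [SimpleGraph.degree]
    congr 1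
    ext i
    simp [SimpleGraph.mem_neighborFinset, G.adj_comm]
  -- inverse of D
  have hDinv : D⁻¹ = Matrix.diagonal (fun i => (d i)⁻¹) := by
    by_cases hall : ∀ i, d i ≠ 0
    · apply Matrix.inv_eq_right_inv
      rw [hD, Matrix.diagonal_mul_diagonal]
      have h1 : (fun i => d i * (d i)⁻¹) = fun _ => (1:ℝ) := by
        funext i
        exact mul_inv_cancel₀ (hall i)
      rw [h1, Matrix.diagonal_one]
    · push_neg at hall
      obtain ⟨i0, hi0⟩ := hall
      have hdeg0 : G.degree i0 = 0 := by
        have := hd i0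
        rw [hi0] at this
        exact_mod_cast this.symm
      have hnoadj : ∀ w, ¬ G.Adj i0 w := by
        intro w hw
        have : 0 < G.degree i0 := by
          rw [← SimpleGraph.card_neighborFinset_eq_degree]
          exact Finset.card_pos.2 ⟨w, (SimpleGraph.mem_neighborFinset G i0 w).2 hw⟩
        omega
      have heq : ∀ i : Fin n, i = i0 := by
        intro i
        obtain ⟨p⟩ := (hG.preconnected i0 i)
        cases p with
        | nil => rfl
        | cons h _ => exact absurd h (hnoadj _)
      have hall0 : ∀ i, d i = 0 := fun i => (heq i) ▸ hi0
      have hdet : ¬ IsUnit D.det := by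
        rw [hD, Matrix.det_diagonal]
        rw [Finset.prod_eq_zero (Finset.mem_univ i0) hi0]
        simp
      rw [Matrix.nonsing_inv_apply_not_isUnit _ hdet]
      have : (fun i => (d i)⁻¹) = fun _ => (0:ℝ) := by
        funext i; rw [hall0 i, _root_.inv_zero]
      rw [this, Matrix.diagonal_zero]
  -- entrywise formula for Ptilde
  have hPij : ∀ i j, Ptilde i j = W i j / (d i + a) + (a / (d i + a)) * v j := by
    intro i j
    rw [hPt, hA, hDinv, Matrix.diagonal_mul_diagonal, Matrix.add_apply,
      Matrix.diagonal_mul, Matrix.sub_mul, Matrix.sub_apply, Matrix.one_mul,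
      Matrix.diagonal_mul, Matrix.of_apply]
    have h2 : α i * (d i)⁻¹ * W i j = W i j / (d i + a) := by
      rw [hW]
      by_cases hij : G.Adj i j
      · have hdeg : 0 < G.degree i := by
          rw [← SimpleGraph.card_neighborFinset_eq_degree]
          exact Finset.card_pos.2 ⟨j, (SimpleGraph.mem_neighborFinset G i j).2 hij⟩
        have hdi : d i ≠ 0 := by
          rw [hd]; exact_mod_cast hdeg.ne'
        simp only [SimpleGraph.adjMatrix_apply, if_pos hij]
        rw [hα]
        have := hda' i
        field_simp
      · simp [hij]
    have h3 : v j - α i * v j = a / (d i + a) * v j := by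
      rw [hα]
      have := hda' i
      field_simp
      ring
    rw [h2, h3]
  constructor
  · funext j
    have hterm : ∀ i, π i * Ptilde i j = W i j / S + a / (n * S) := by
      intro i
      rw [hPij, hπ, hv]
      have h1 := hda' i
      have h2 := hS.ne'
      have h3 := hnR.ne'
      field_simp
    rw [Matrix.vecMul, dotProduct]
    simp_rw [hterm]
    rw [Finset.sum_add_distrib, ← Finset.sum_div, hcol, Finset.sum_const, Finset.card_univ,
      Fintype.card_fin, nsmul_eq_mul, hπ]
    field_simp
  · simp_rw [hπ]
    rw [← Finset.sum_div, hSsum, div_self hS.ne']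
end

section
/- Let π be a stationary distribution of P̃ = AP + (I−A)𝟙vᵀ (with P row-stochastic, A = diag(αᵢ), αᵢ ∈ [0,1), v a probability row vector, and Σᵢπᵢ(1−αᵢ) > 0). Then vᵀ(I−AP)⁻¹ = π / (Σᵢ πᵢ(1−αᵢ)), and hence the Location-of-Restart PageRank satisfies ρⱼ(v) = πⱼ(1−αⱼ)/(Σᵢ πᵢ(1−αᵢ)). -/
open Matrix

theorem stmt13 {n : ℕ} (P A : Matrix (Fin n) (Fin n) ℝ) (α v π : Fin n → ℝ)
    (hP0 : ∀ i j, 0 ≤ P i j) (hP1 : ∀ i, ∑ j, P i j = 1)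
    (hA : A = Matrix.diagonal α) (hα : ∀ i, 0 ≤ α i ∧ α i < 1)
    (hv0 : ∀ i, 0 ≤ v i) (hv1 : ∑ i, v i = 1)
    (hπ : Matrix.vecMul π (A * P + (1 - A) * Matrix.of (fun _ j => v j)) = π)
    (hπ1 : ∑ i, π i = 1)
    (hpos : 0 < ∑ i, π i * (1 - α i)) :
    Matrix.vecMul v (1 - A * P)⁻¹ = (∑ i, π i * (1 - α i))⁻¹ • π ∧
    ∀ j, (Matrix.vecMul v ((1 - A * P)⁻¹ * (1 - A))) j =
      π j * (1 - α j) / (∑ i, π i * (1 - α i)) := by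
  set c : ℝ := ∑ i, π i * (1 - α i) with hc
  set M : Matrix (Fin n) (Fin n) ℝ := 1 - A * P with hM
  -- det M ≠ 0
  have hdet : M.det ≠ 0 := by
    intro hd
    obtain ⟨x, hx0, hx⟩ := (Matrix.exists_mulVec_eq_zero_iff).2 hd
    have hrec : ∀ i, x i = α i * ∑ j, P i j * x j := by
      intro i
      have := congrFun hx i
      simp only [hM, Matrix.sub_mulVec, Matrix.one_mulVec, Pi.sub_apply,
        Pi.zero_apply, sub_eq_zero] at this
      rw [this, hA]
      have hAP : ((Matrix.diagonal α * P) *ᵥ x) i = α i * ∑ j, P i j * x j := by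
        rw [← Matrix.mulVec_mulVec, Matrix.mulVec_diagonal]
        rfl
      rw [hAP]
    have hne : Nonempty (Fin n) := by
      rcases Nat.eq_zero_or_pos n with h | h
      · exfalso
        rw [hc] at hpos
        subst h
        simp at hpos
      · exact ⟨⟨0, h⟩⟩
    obtain ⟨i0, _, hmax⟩ := Finset.exists_max_image Finset.univ (fun i => |x i|)
      ⟨Classical.arbitrary (Fin n), Finset.mem_univ _⟩
    have hb : |x i0| ≤ α i0 * |x i0| := by
      calc |x i0| = |α i0 * ∑ j, P i0 j * x j| := by rw [hrec i0]
        _ = α i0 * |∑ j, P i0 j * x j| := by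
            rw [abs_mul, abs_of_nonneg (hα i0).1]
        _ ≤ α i0 * ∑ j, |P i0 j * x j| :=
            mul_le_mul_of_nonneg_left (Finset.abs_sum_le_sum_abs _ _) (hα i0).1
        _ ≤ α i0 * ∑ j, P i0 j * |x i0| := by
            refine mul_le_mul_of_nonneg_left (Finset.sum_le_sum fun j _ => ?_) (hα i0).1
            rw [abs_mul, abs_of_nonneg (hP0 i0 j)]
            exact mul_le_mul_of_nonneg_left (hmax j (Finset.mem_univ j)) (hP0 i0 j)
        _ = α i0 * |x i0| := by rw [← Finset.sum_mul, hP1 i0, one_mul]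
    have hxi0 : |x i0| = 0 := by
      by_contra h
      have h' : 0 < |x i0| := lt_of_le_of_ne (abs_nonneg _) (Ne.symm h)
      nlinarith [(hα i0).2]
    exact hx0 (funext fun j => abs_eq_zero.1 (le_antisymm
      ((hmax j (Finset.mem_univ j)).trans hxi0.le) (abs_nonneg _)))
  have hMunit : IsUnit M.det := isUnit_iff_ne_zero.2 hdet
  -- π M = c • v
  have hπM : Matrix.vecMul π M = c • v := by
    have h1 : Matrix.vecMul π (A * P) + Matrix.vecMul π ((1 - A) * Matrix.of (fun _ j => v j)) = π := by
      rw [← Matrix.vecMul_add]; exact hπ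
    have h2 : Matrix.vecMul π ((1 - A) * Matrix.of (fun _ j => v j)) = c • v := by
      rw [← Matrix.vecMul_vecMul]
      funext j
      have hva : Matrix.vecMul π (1 - A) = fun i => π i * (1 - α i) := by
        funext i
        rw [hA, show (1 : Matrix (Fin n) (Fin n) ℝ) - Matrix.diagonal α
          = Matrix.diagonal (fun i => 1 - α i) by
            rw [← Matrix.diagonal_one, Matrix.diagonal_sub]]
        simp [Matrix.vecMul_diagonal]
      rw [hva]
      simp [Matrix.vecMul, dotProduct, hc, ← Finset.sum_mul]
    funext j
    have h1j := congrFun h1 j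
    have h2j := congrFun h2 j
    simp only [Pi.add_apply] at h1j
    simp only [hM, Matrix.vecMul_sub, Matrix.vecMul_one, Pi.sub_apply]
    linarith
  -- main identity
  have hkey : Matrix.vecMul v M⁻¹ = c⁻¹ • π := by
    have : Matrix.vecMul (Matrix.vecMul π M) M⁻¹ = π := by
      rw [Matrix.vecMul_vecMul, Matrix.mul_nonsing_inv M hMunit, Matrix.vecMul_one]
    rw [hπM] at this
    have hsm : Matrix.vecMul (c • v) M⁻¹ = c • Matrix.vecMul v M⁻¹ := by
      funext j; simp [Matrix.vecMul, dotProduct, Finset.mul_sum, mul_assoc]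
    rw [hsm] at this
    have hc0 : c ≠ 0 := ne_of_gt hpos
    funext j
    have := congrFun this j
    simp only [Pi.smul_apply, smul_eq_mul] at this ⊢
    rw [← this, inv_mul_cancel_left₀ hc0]
  refine ⟨hkey, fun j => ?_⟩
  rw [← Matrix.vecMul_vecMul, hkey]
  have hdiag : (1 : Matrix (Fin n) (Fin n) ℝ) - A = Matrix.diagonal (fun i => 1 - α i) := by
    rw [hA, ← Matrix.diagonal_one, Matrix.diagonal_sub]
  rw [hdiag]
  simp [Matrix.vecMul_diagonal, div_eq_mul_inv]
  ring
end

section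
/- Let G be a connected undirected graph with degrees dᵢ, and for each node i let aᵢ > 0, αᵢ = dᵢ/(dᵢ+aᵢ), and restart distribution vᵢ = aᵢ/Σₖaₖ. Then the stationary distribution of P̃ = AD⁻¹W + (I−A)𝟙vᵀ is πⱼ = (dⱼ+aⱼ)/(2|E| + Σₖaₖ), and the Location-of-Restart PageRank is ρⱼ(v) = aⱼ/Σₖaₖ. -/
open Matrix

theorem stmt14 {n : ℕ} (G : SimpleGraph (Fin n)) [DecidableRel G.Adj]
    (hG : G.Connected) (a : Fin n → ℝ) (ha : ∀ i, 0 < a i)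
    (W D A : Matrix (Fin n) (Fin n) ℝ) (d α v π : Fin n → ℝ)
    (hW : W = G.adjMatrix ℝ) (hd : ∀ i, d i = (G.degree i : ℝ))
    (hD : D = Matrix.diagonal d)
    (hα : ∀ i, α i = d i / (d i + a i)) (hA : A = Matrix.diagonal α)
    (hv : ∀ i, v i = a i / ∑ k, a k)
    (hπ : ∀ j, π j = (d j + a j) / ((∑ k, d k) + ∑ k, a k))
    (Ptilde : Matrix (Fin n) (Fin n) ℝ)
    (hPt : Ptilde = A * D⁻¹ * W + (1 - A) * Matrix.of (fun _ j => v j)) :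
    (Matrix.vecMul π Ptilde = π ∧ ∑ i, π i = 1) ∧
    ∀ j, (Matrix.vecMul v (((1 - A * D⁻¹ * W)⁻¹) * (1 - A))) j = a j / ∑ k, a k := by
  have hn : Nonempty (Fin n) := hG.nonempty
  set S : ℝ := (∑ k, d k) + ∑ k, a k with hSdef
  set Q : Matrix (Fin n) (Fin n) ℝ := A * D⁻¹ * W with hQdef
  have hasum : 0 < ∑ k, a k :=
    Finset.sum_pos (fun i _ => ha i) Finset.univ_nonempty
  have hdnn : ∀ i, 0 ≤ d i := fun i => by rw [hd i]; positivity
  have hda : ∀ i, 0 < d i + a i := fun i => add_pos_of_nonneg_of_pos (hdnn i) (ha i)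
  have hS : 0 < S := add_pos_of_nonneg_of_pos
    (Finset.sum_nonneg fun i _ => hdnn i) hasum
  have hSne : S ≠ 0 := hS.ne'
  have hane : (∑ k, a k) ≠ 0 := hasum.ne'
  -- entries of Q = A * D⁻¹ * W
  have hQe : ∀ i j, Q i j = α i * (d i)⁻¹ * W i j := by
    rcases subsingleton_or_nontrivial (Fin n) with hs | hs
    · have hα0 : ∀ i, α i = 0 := by
        intro i
        have hdeg : ∀ j, ¬ G.Adj i j := fun j h => h.ne (Subsingleton.elim i j)
        have : G.degree i = 0 := by
          simp [SimpleGraph.degree, SimpleGraph.neighborFinset,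
            Set.toFinset_eq_empty, SimpleGraph.neighborSet, Set.eq_empty_iff_forall_notMem,
            hdeg]
          ext w; simp [Set.toFinset, hdeg]
        rw [hα i, hd i, this]; simp
      have hA0 : A = 0 := by
        rw [hA]
        have : α = fun _ => (0 : ℝ) := funext hα0
        rw [this]
        simp
      intro i j
      simp [hQdef, hA0, hα0]
    · have hdeg : ∀ i, 0 < d i := by
        intro i
        obtain ⟨w, hw⟩ := exists_ne i
        obtain ⟨p⟩ := hG.preconnected i w
        have hadj : ∃ u, G.Adj i u := by
          cases p with
          | nil => exact absurd rfl hw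
          | cons h q => exact ⟨_, h⟩
        rw [hd i]
        exact_mod_cast (SimpleGraph.degree_pos_iff_exists_adj G i).mpr hadj
      have hDinv : D⁻¹ = Matrix.diagonal (fun i => (d i)⁻¹) := by
        have h1 : D * Matrix.diagonal (fun i => (d i)⁻¹) = 1 := by
          rw [hD, Matrix.diagonal_mul_diagonal]
          have : (fun i => d i * (d i)⁻¹) = fun _ => (1 : ℝ) :=
            funext fun i => mul_inv_cancel₀ (hdeg i).ne'
          rw [this, Matrix.diagonal_one]
        exact Matrix.inv_eq_right_inv h1
      intro i j
      rw [hQdef, hA, hDinv, Matrix.diagonal_mul_diagonal, Matrix.diagonal_mul]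
  -- W basics
  have hWnn : ∀ i j, 0 ≤ W i j := fun i j => by
    rw [hW]; by_cases h : G.Adj i j <;> simp [h]
  have hWrow : ∀ i, ∑ j, W i j = d i := by
    intro i
    rw [hW, hd]
    simp [SimpleGraph.adjMatrix_apply, SimpleGraph.degree, SimpleGraph.neighborFinset,
      Finset.sum_ite_mem]
  have hWcol : ∀ j, ∑ i, W i j = d j := by
    intro j
    have : ∀ i, W i j = W j i := by
      intro i; rw [hW]; simp [SimpleGraph.adjMatrix_apply, G.adj_comm]
    simp_rw [this]
    exact hWrow j
  have hWpos_deg : ∀ i j, W i j ≠ 0 → 0 < d i := by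
    intro i j h
    rw [hW] at h
    have hadj : G.Adj i j := by by_contra hc; simp [hc] at h
    rw [hd]
    exact_mod_cast (SimpleGraph.degree_pos_iff_exists_adj G i).mpr ⟨j, hadj⟩
  -- α facts
  have hαnn : ∀ i, 0 ≤ α i := fun i => by
    rw [hα i]; exact div_nonneg (hdnn i) (hda i).le
  have hαlt : ∀ i, α i < 1 := fun i => by
    rw [hα i]
    rw [div_lt_one (hda i)]
    linarith [ha i]
  -- key term computations
  have key1 : ∀ i j, π i * (α i * (d i)⁻¹ * W i j) = W i j / S := by
    intro i j
    by_cases h : W i j = 0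
    · simp [h]
    · have hdi : 0 < d i := hWpos_deg i j h
      have h1 : d i + a i ≠ 0 := (hda i).ne'
      have h2 : d i ≠ 0 := hdi.ne'
      rw [hπ i, hα i]
      field_simp
  have key2 : ∀ i, π i * (1 - α i) = a i / S := by
    intro i
    have h1 : d i + a i ≠ 0 := (hda i).ne'
    rw [hπ i, hα i]
    field_simp
    ring
  have hπsum1 : ∑ i, π i * (1 - α i) = (∑ k, a k) / S := by
    simp_rw [key2]
    rw [← Finset.sum_div]
  have eQ : ∀ j, (Matrix.vecMul π Q) j = d j / S := by
    intro j
    rw [Matrix.vecMul, dotProduct]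
    calc ∑ i, π i * Q i j = ∑ i, π i * (α i * (d i)⁻¹ * W i j) := by
          exact Finset.sum_congr rfl fun i _ => by rw [hQe i j]
      _ = ∑ i, W i j / S := Finset.sum_congr rfl fun i _ => key1 i j
      _ = (∑ i, W i j) / S := by rw [← Finset.sum_div]
      _ = d j / S := by rw [hWcol j]
  have eR : ∀ j, (Matrix.vecMul π ((1 - A) * Matrix.of (fun _ j => v j))) j = a j / S := by
    intro j
    rw [← Matrix.vecMul_vecMul]
    have h1 : Matrix.vecMul π (1 - A) = fun i => π i * (1 - α i) := by
      funext i
      rw [Matrix.vecMul_sub, Matrix.vecMul_one, Pi.sub_apply, hA,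
        Matrix.vecMul_diagonal]
      ring
    rw [h1, Matrix.vecMul, dotProduct]
    have : ∀ i, π i * (1 - α i) * Matrix.of (fun _ j => v j) i j
        = π i * (1 - α i) * v j := fun i => rfl
    simp_rw [this]
    rw [← Finset.sum_mul, hπsum1, hv j]
    field_simp
  -- stationarity
  have hstat : Matrix.vecMul π Ptilde = π := by
    funext j
    rw [hPt, Matrix.vecMul_add, Pi.add_apply, eQ j, eR j, hπ j,
      ← add_div]
  have hπsum : ∑ i, π i = 1 := by
    simp_rw [hπ]
    rw [← Finset.sum_div, Finset.sum_add_distrib]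
    exact div_self hSne
  refine ⟨⟨hstat, hπsum⟩, ?_⟩
  -- invertibility of 1 - Q
  have hdet : (1 - Q).det ≠ 0 := by
    intro hdet0
    obtain ⟨x, hx0, hxv⟩ := (Matrix.exists_mulVec_eq_zero_iff).mpr hdet0
    obtain ⟨i, -, hmax⟩ := Finset.exists_max_image Finset.univ (fun i => |x i|)
      Finset.univ_nonempty
    have hximax : ∀ j, |x j| ≤ |x i| := fun j => hmax j (Finset.mem_univ j)
    have hxipos : 0 < |x i| := by
      obtain ⟨k, hk⟩ := Function.ne_iff.mp hx0
      exact lt_of_lt_of_le (abs_pos.mpr hk) (hximax k)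
    have hxi : x i = ∑ j, Q i j * x j := by
      have h0 := congrFun hxv i
      rw [Matrix.sub_mulVec, Matrix.one_mulVec] at h0
      have h2 : x i - (Q *ᵥ x) i = 0 := h0
      rw [Matrix.mulVec, dotProduct] at h2
      linarith
    have hQnn : ∀ j, 0 ≤ Q i j := fun j =>
      (hQe i j) ▸ mul_nonneg (mul_nonneg (hαnn i) (inv_nonneg.mpr (hdnn i))) (hWnn i j)
    have hQrow : ∑ j, Q i j ≤ α i := by
      by_cases hdi : d i = 0
      · have : ∀ j, Q i j = 0 := fun j => by rw [hQe i j, hdi]; simp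
        simp [this, hαnn i]
      · have : ∑ j, Q i j = α i := by
          simp_rw [fun j => hQe i j]
          rw [← Finset.mul_sum, hWrow i]
          field_simp
        rw [this]
    have hb : |x i| ≤ α i * |x i| := by
      calc |x i| = |∑ j, Q i j * x j| := by rw [hxi]
        _ ≤ ∑ j, |Q i j * x j| := Finset.abs_sum_le_sum_abs _ _
        _ = ∑ j, Q i j * |x j| := by
            refine Finset.sum_congr rfl fun j _ => ?_
            rw [abs_mul, abs_of_nonneg (hQnn j)]
        _ ≤ ∑ j, Q i j * |x i| := by
            refine Finset.sum_le_sum fun j _ => ?_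
            exact mul_le_mul_of_nonneg_left (hximax j) (hQnn j)
        _ = (∑ j, Q i j) * |x i| := by rw [Finset.sum_mul]
        _ ≤ α i * |x i| := mul_le_mul_of_nonneg_right hQrow hxipos.le
    nlinarith [hαlt i, hxipos]
  have hunit : IsUnit (1 - Q).det := isUnit_iff_ne_zero.mpr hdet
  -- π (1 - Q) = (a/S)
  have hπ1mQ : ∀ j, Matrix.vecMul π (1 - Q) j = a j / S := by
    intro j
    rw [Matrix.vecMul_sub, Matrix.vecMul_one, Pi.sub_apply, eQ j, hπ j,
      div_sub_div_same]
    ring_nf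
  have hveq : v = Matrix.vecMul ((S / ∑ k, a k) • π) (1 - Q) := by
    funext j
    rw [Matrix.smul_vecMul, Pi.smul_apply, hπ1mQ j, hv j, smul_eq_mul]
    field_simp
  intro j
  rw [← Matrix.vecMul_vecMul]
  have hres : Matrix.vecMul v (1 - Q)⁻¹ = (S / ∑ k, a k) • π := by
    rw [hveq, Matrix.vecMul_vecMul, Matrix.mul_nonsing_inv _ hunit, Matrix.vecMul_one]
  rw [hres, Matrix.smul_vecMul, Pi.smul_apply, smul_eq_mul]
  have h1A : Matrix.vecMul π (1 - A) j = a j / S := by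
    rw [Matrix.vecMul_sub, Matrix.vecMul_one, Pi.sub_apply, hA,
      Matrix.vecMul_diagonal]
    have := key2 j
    linarith [key2 j]
  rw [h1A]
  field_simp
end
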